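/- Let p and q be positive integers and set n = pq. The cokernel of the map p₃* : H³(ℤ/qℤ, ℂˣ) → H³(ℤ/nℤ, ℂˣ) induced by the reduction homomorphism ℤ/nℤ → ℤ/qℤ is a cyclic group of order p·gcd(p,q). -/

import Mathlib

open scoped BigOperators

namespace GroupCohomologyUnits

/-- Inhomogeneous `n`-cochains on `G` with values in `ℂˣ` (trivial `G`-action). -/
abbrev Cochain (n : ℕ) (G : Type*) [Group G] : Type _ := (Fin n → G) → ℂˣ

/-- The inhomogeneous coboundary map for the trivial action of `G` on `ℂˣ`. -/
def d (n : ℕ) (G : Type*) [Group G] : Cochain n G →* Cochain (n + 1) G where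
  toFun c := fun g =>
    c (fun i => g i.succ) *
      ∏ j : Fin (n + 1), c (Fin.contractNth j (· * ·) g) ^ ((-1 : ℤ) ^ ((j : ℕ) + 1))
  map_one' := by
    funext g
    simp
  map_mul' c c' := by
    funext g
    simp only [Pi.mul_apply, mul_zpow, Finset.prod_mul_distrib]
    exact mul_mul_mul_comm _ _ _ _

/-- The subgroup of `n`-cocycles. -/
def cocycles (n : ℕ) (G : Type*) [Group G] : Subgroup (Cochain n G) := (d n G).ker

/-- The subgroup of `n`-coboundaries. -/
def coboundaries (n : ℕ) (G : Type*) [Group G] : Subgroup (Cochain n G) :=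
  match n with
  | 0 => ⊥
  | (m + 1) => (d m G).range

/-- `Hⁿ(G, ℂˣ)`: the `n`-th group cohomology of `G` with coefficients in the trivial
module `ℂˣ`, i.e. the quotient of the `n`-cocycles by the `n`-coboundaries. -/
abbrev H (n : ℕ) (G : Type*) [Group G] : Type _ :=
  cocycles n G ⧸ (coboundaries n G).subgroupOf (cocycles n G)

instance (n : ℕ) (G : Type*) [Group G] : CommGroup (H n G) :=
  QuotientGroup.Quotient.commGroup _

section Functoriality

variable {G Q : Type*} [Group G] [Group Q]

/-- Precomposition of cochains with a group homomorphism. -/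
def comapCochain (φ : G →* Q) (n : ℕ) : Cochain n Q →* Cochain n G where
  toFun c := fun g => c fun i => φ (g i)
  map_one' := rfl
  map_mul' _ _ := rfl

theorem contractNth_comp (φ : G →* Q) {n : ℕ} (j : Fin (n + 1)) (g : Fin (n + 1) → G) :
    Fin.contractNth j (· * ·) (fun i => φ (g i)) =
      fun k => φ (Fin.contractNth j (· * ·) g k) := by
  funext k
  unfold Fin.contractNth
  split_ifs <;> simp

theorem comapCochain_d (φ : G →* Q) (n : ℕ) (c : Cochain n Q) :
    d n G (comapCochain φ n c) = comapCochain φ (n + 1) (d n Q c) := by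
  funext g
  show (comapCochain φ n c) (fun i => g i.succ) *
      ∏ j : Fin (n + 1), (comapCochain φ n c) (Fin.contractNth j (· * ·) g)
        ^ ((-1 : ℤ) ^ ((j : ℕ) + 1)) = _
  show _ = c (fun i => φ (g i.succ)) *
      ∏ j : Fin (n + 1), c (Fin.contractNth j (· * ·) fun i => φ (g i))
        ^ ((-1 : ℤ) ^ ((j : ℕ) + 1))
  refine congrArg₂ (· * ·) rfl ?_
  refine Finset.prod_congr rfl fun j _ => ?_
  rw [contractNth_comp]
  rfl

theorem comapCochain_mem_cocycles (φ : G →* Q) (n : ℕ) {c : Cochain n Q}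
    (hc : c ∈ cocycles n Q) : comapCochain φ n c ∈ cocycles n G := by
  have hc' : d n Q c = 1 := hc
  show d n G (comapCochain φ n c) = 1
  rw [comapCochain_d, hc', map_one]

theorem comapCochain_mem_coboundaries (φ : G →* Q) (n : ℕ) {c : Cochain n Q}
    (hc : c ∈ coboundaries n Q) : comapCochain φ n c ∈ coboundaries n G := by
  cases n with
  | zero =>
    have : c = 1 := hc
    subst this
    show (1 : Cochain 0 G) ∈ (⊥ : Subgroup (Cochain 0 G))
    exact Subgroup.one_mem _
  | succ m =>
    obtain ⟨b, hb⟩ := hc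
    exact ⟨comapCochain φ m b, by rw [comapCochain_d, hb]⟩

/-- The homomorphism on cocycles induced by precomposition. -/
def comapCocycles (φ : G →* Q) (n : ℕ) : cocycles n Q →* cocycles n G :=
  ((comapCochain φ n).comp (cocycles n Q).subtype).codRestrict (cocycles n G)
    fun c => comapCochain_mem_cocycles φ n c.2

/-- `φ* : Hⁿ(Q, ℂˣ) →* Hⁿ(G, ℂˣ)`, the map on group cohomology induced by a group
homomorphism `φ : G →* Q` (inflation when `φ` is surjective). -/
def Hmap (φ : G →* Q) (n : ℕ) : H n Q →* H n G :=
  QuotientGroup.map _ _ (comapCocycles φ n) (by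
    intro c hc
    exact comapCochain_mem_coboundaries φ n hc)

end Functoriality



/-! ### Auxiliary development -/

section VecHelpers

variable {G : Type*} [Group G]

theorem aux_eta3 (g : Fin 3 → G) : ![g 0, g 1, g 2] = g := by
  funext i; fin_cases i <;> rfl

theorem aux_contract4_0 (g : Fin 4 → G) :
    Fin.contractNth 0 (· * ·) g = ![g 0 * g 1, g 2, g 3] := by
  funext k; fin_cases k <;>
    simp [Fin.contractNth, Fin.ext_iff,
      show ((0:Fin 4):ℕ) = 0 from rfl, show ((1:Fin 4):ℕ) = 1 from rfl,
      show ((2:Fin 4):ℕ) = 2 from rfl, show ((3:Fin 4):ℕ) = 3 from rfl] <;> try rfl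

theorem aux_contract4_1 (g : Fin 4 → G) :
    Fin.contractNth 1 (· * ·) g = ![g 0, g 1 * g 2, g 3] := by
  funext k; fin_cases k <;>
    simp [Fin.contractNth, Fin.ext_iff,
      show ((0:Fin 4):ℕ) = 0 from rfl, show ((1:Fin 4):ℕ) = 1 from rfl,
      show ((2:Fin 4):ℕ) = 2 from rfl, show ((3:Fin 4):ℕ) = 3 from rfl] <;> try rfl

theorem aux_contract4_2 (g : Fin 4 → G) :
    Fin.contractNth 2 (· * ·) g = ![g 0, g 1, g 2 * g 3] := by
  funext k; fin_cases k <;>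
    simp [Fin.contractNth, Fin.ext_iff,
      show ((0:Fin 4):ℕ) = 0 from rfl, show ((1:Fin 4):ℕ) = 1 from rfl,
      show ((2:Fin 4):ℕ) = 2 from rfl, show ((3:Fin 4):ℕ) = 3 from rfl] <;> try rfl

theorem aux_contract4_3 (g : Fin 4 → G) :
    Fin.contractNth 3 (· * ·) g = ![g 0, g 1, g 2] := by
  funext k; fin_cases k <;>
    simp [Fin.contractNth, Fin.ext_iff,
      show ((0:Fin 4):ℕ) = 0 from rfl, show ((1:Fin 4):ℕ) = 1 from rfl,
      show ((2:Fin 4):ℕ) = 2 from rfl, show ((3:Fin 4):ℕ) = 3 from rfl] <;> try rfl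

theorem aux_contract3_0 (g : Fin 3 → G) :
    Fin.contractNth 0 (· * ·) g = ![g 0 * g 1, g 2] := by
  funext k; fin_cases k <;>
    simp [Fin.contractNth, Fin.ext_iff,
      show ((0:Fin 3):ℕ) = 0 from rfl, show ((1:Fin 3):ℕ) = 1 from rfl,
      show ((2:Fin 3):ℕ) = 2 from rfl] <;> try rfl

theorem aux_contract3_1 (g : Fin 3 → G) :
    Fin.contractNth 1 (· * ·) g = ![g 0, g 1 * g 2] := by
  funext k; fin_cases k <;>
    simp [Fin.contractNth, Fin.ext_iff,
      show ((0:Fin 3):ℕ) = 0 from rfl, show ((1:Fin 3):ℕ) = 1 from rfl,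
      show ((2:Fin 3):ℕ) = 2 from rfl] <;> try rfl

theorem aux_contract3_2 (g : Fin 3 → G) :
    Fin.contractNth 2 (· * ·) g = ![g 0, g 1] := by
  funext k; fin_cases k <;>
    simp [Fin.contractNth, Fin.ext_iff,
      show ((0:Fin 3):ℕ) = 0 from rfl, show ((1:Fin 3):ℕ) = 1 from rfl,
      show ((2:Fin 3):ℕ) = 2 from rfl] <;> try rfl

theorem aux_tuple4_succ (g : Fin 4 → G) : (fun i : Fin 3 => g i.succ) = ![g 1, g 2, g 3] := by
  funext i; fin_cases i <;> rfl

theorem aux_tuple3_succ (g : Fin 3 → G) : (fun i : Fin 2 => g i.succ) = ![g 1, g 2] := by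
  funext i; fin_cases i <;> rfl

theorem d3_apply (f : Cochain 3 G) (g : Fin 4 → G) :
    d 3 G f g = f ![g 1, g 2, g 3] * (f ![g 0 * g 1, g 2, g 3])⁻¹ *
      f ![g 0, g 1 * g 2, g 3] * (f ![g 0, g 1, g 2 * g 3])⁻¹ * f ![g 0, g 1, g 2] := by
  show f (fun i => g i.succ) *
      ∏ j : Fin 4, f (Fin.contractNth j (· * ·) g) ^ ((-1 : ℤ) ^ ((j : ℕ) + 1)) = _
  rw [Fin.prod_univ_four, aux_tuple4_succ, aux_contract4_0, aux_contract4_1, aux_contract4_2,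
    aux_contract4_3]
  norm_num [show ((0:Fin 4):ℕ) = 0 from rfl, show ((1:Fin 4):ℕ) = 1 from rfl,
    show ((2:Fin 4):ℕ) = 2 from rfl, show ((3:Fin 4):ℕ) = 3 from rfl]
  group

theorem d2_apply (b : Cochain 2 G) (g : Fin 3 → G) :
    d 2 G b g = b ![g 1, g 2] * (b ![g 0 * g 1, g 2])⁻¹ *
      b ![g 0, g 1 * g 2] * (b ![g 0, g 1])⁻¹ := by
  show b (fun i => g i.succ) *
      ∏ j : Fin 3, b (Fin.contractNth j (· * ·) g) ^ ((-1 : ℤ) ^ ((j : ℕ) + 1)) = _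
  rw [Fin.prod_univ_three, aux_tuple3_succ, aux_contract3_0, aux_contract3_1, aux_contract3_2]
  norm_num [show ((0:Fin 3):ℕ) = 0 from rfl, show ((1:Fin 3):ℕ) = 1 from rfl,
    show ((2:Fin 3):ℕ) = 2 from rfl]
  group

/-- The 5-term relation satisfied by a 3-cocycle. -/
theorem cocycle_rel {f : Cochain 3 G} (hf : f ∈ cocycles 3 G) (x y z w : G) :
    f ![y, z, w] * (f ![x * y, z, w])⁻¹ * f ![x, y * z, w] * (f ![x, y, z * w])⁻¹ *
      f ![x, y, z] = 1 := by
  have h1 : d 3 G f = 1 := hf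
  have h2 := congrFun h1 ![x, y, z, w]
  rw [d3_apply] at h2
  simpa using h2

theorem d2_apply' (b : Cochain 2 G) (x y z : G) :
    d 2 G b ![x, y, z] = b ![y, z] * (b ![x * y, z])⁻¹ * b ![x, y * z] * (b ![x, y])⁻¹ := by
  have := d2_apply b ![x, y, z]
  simpa using this

end VecHelpers

section ProdHelpers

theorem prod_range_shift {M : Type*} [CommGroup M] (v : ℕ → M) (m b : ℕ)
    (hper : ∀ k, v (m + k) = v k) :
    ∏ k ∈ Finset.range m, v (b + k) = ∏ k ∈ Finset.range m, v k := by
  have h1 : (∏ k ∈ Finset.range b, v k) * ∏ k ∈ Finset.range m, v (b + k)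
      = ∏ k ∈ Finset.range (b + m), v k := (Finset.prod_range_add v b m).symm
  have h2 : (∏ k ∈ Finset.range m, v k) * ∏ k ∈ Finset.range b, v (m + k)
      = ∏ k ∈ Finset.range (m + b), v k := (Finset.prod_range_add v m b).symm
  simp only [hper] at h2
  rw [Nat.add_comm m b] at h2
  have h3 := h1.trans h2.symm
  rw [mul_comm (∏ k ∈ Finset.range m, v k) _] at h3
  exact mul_left_cancel h3

theorem prod_range_mul_periodic {M : Type*} [CommMonoid M] (v : ℕ → M) (q p : ℕ)
    (hper : ∀ k, v (q + k) = v k) :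
    ∏ k ∈ Finset.range (p * q), v k = (∏ k ∈ Finset.range q, v k) ^ p := by
  have hper' : ∀ t k, v (t * q + k) = v k := by
    intro t
    induction t with
    | zero => simp
    | succ t iht =>
      intro k
      have he : (t + 1) * q + k = q + (t * q + k) := by ring
      rw [he, hper, iht]
  induction p with
  | zero => simp
  | succ p ih =>
    have he : (p + 1) * q = p * q + q := by ring
    rw [he, Finset.prod_range_add, ih]
    simp only [hper' p]
    rw [pow_succ]


theorem u_shuffle {a b c e : ℂˣ} (h : a * b⁻¹ * c * e⁻¹ * e = 1) : b = a * c := by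
  rw [inv_mul_cancel_right] at h
  have h' := Units.ext_iff.mp h
  simp only [Units.val_mul, Units.val_inv_eq_inv_val, Units.val_one] at h'
  rw [Units.ext_iff]
  simp only [Units.val_mul]
  field_simp at h'
  exact h'.symm

theorem final_algebra (Ayc Axyc Axyz Axb Ps Fy Fxy Fx F1 Fz : ℂˣ)
    (h1 : Ayc * Axyc⁻¹ * (Axyz * Axb⁻¹ * Ps) * F1 * Fz⁻¹ = 1)
    (h2 : F1 = Fy⁻¹ * Fxy) :
    Fz = (Ayc * Fy⁻¹) * (Axyc * Fxy⁻¹)⁻¹ * (Axyz * Fx⁻¹) * (Axb * Fx⁻¹)⁻¹ * Ps := by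
  have h3 : Fz = Ayc * Axyc⁻¹ * (Axyz * Axb⁻¹ * Ps) * F1 := (mul_inv_eq_one.mp h1).symm
  rw [h3, h2]
  rw [Units.ext_iff]
  simp only [Units.val_mul, Units.val_inv_eq_inv_val]
  field_simp

end ProdHelpers

section CyclicGroup

variable (m : ℕ) [NeZero m]

/-- The cyclic group `ℤ/mℤ`, written multiplicatively. -/
abbrev Gm := Multiplicative (ZMod m)

/-- The standard generator. -/
def gen : Gm m := Multiplicative.ofAdd 1

theorem gen_pow (k : ℕ) : gen m ^ k = Multiplicative.ofAdd ((k : ZMod m)) := by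
  rw [gen, ← ofAdd_nsmul]; norm_num

theorem gen_pow_m : gen m ^ m = 1 := by
  rw [gen_pow, ZMod.natCast_self, ofAdd_zero]

theorem gen_pow_val (x : Gm m) : gen m ^ (Multiplicative.toAdd x).val = x := by
  rw [gen_pow, ZMod.natCast_val, ZMod.cast_id]; rfl

theorem gen_pow_per (k : ℕ) : gen m ^ (m + k) = gen m ^ k := by
  rw [pow_add, gen_pow_m, one_mul]

/-- The carry indicator. -/
def epsN (y z : Gm m) : ℕ :=
  if m ≤ (Multiplicative.toAdd y).val + (Multiplicative.toAdd z).val then 1 else 0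

theorem val_add_eq (y z : Gm m) :
    (Multiplicative.toAdd y).val + (Multiplicative.toAdd z).val =
      (Multiplicative.toAdd (y * z)).val + m * epsN m y z := by
  have hy := ZMod.val_lt (Multiplicative.toAdd y)
  have hz := ZMod.val_lt (Multiplicative.toAdd z)
  have h : (Multiplicative.toAdd (y * z)).val
      = ((Multiplicative.toAdd y).val + (Multiplicative.toAdd z).val) % m := by
    rw [toAdd_mul, ZMod.val_add]
  rw [epsN]; split_ifs with hc
  · have h2 : ((Multiplicative.toAdd y).val + (Multiplicative.toAdd z).val) % m
        = (Multiplicative.toAdd y).val + (Multiplicative.toAdd z).val - m := by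
      rw [Nat.mod_eq_sub_mod hc, Nat.mod_eq_of_lt (by omega)]
    omega
  · have h2 : ((Multiplicative.toAdd y).val + (Multiplicative.toAdd z).val) % m
        = (Multiplicative.toAdd y).val + (Multiplicative.toAdd z).val :=
      Nat.mod_eq_of_lt (by omega)
    omega

theorem eps_bracket (y z w : Gm m) :
    epsN m (y * z) w + epsN m y z = epsN m y (z * w) + epsN m z w := by
  have hm : 0 < m := Nat.pos_of_ne_zero (NeZero.ne m)
  have k1 := val_add_eq m y z
  have k2 := val_add_eq m (y * z) w
  have k3 := val_add_eq m z w
  have k4 := val_add_eq m y (z * w)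
  rw [mul_assoc] at k2
  refine Nat.eq_of_mul_eq_mul_left hm ?_
  zify at k1 k2 k3 k4 ⊢
  nlinarith [k1, k2, k3, k4]

/-- The standard 3-cocycle attached to `ζ` with `ζ ^ m = 1`. -/
def std (ζ : ℂˣ) : Cochain 3 (Gm m) :=
  fun g => ζ ^ ((Multiplicative.toAdd (g 0)).val * epsN m (g 1) (g 2))

theorem std_apply (ζ : ℂˣ) (x y z : Gm m) :
    std m ζ ![x, y, z] = ζ ^ ((Multiplicative.toAdd x).val * epsN m y z) := rfl

theorem std_one : std m 1 = 1 := by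
  funext g; simp [std]

theorem pow_five_cancel (ζ : ℂˣ) (E1 E2 E3 E4 E5 T mm : ℕ) (hζ : ζ ^ mm = 1)
    (hkey : E1 + E3 + E5 = E2 + E4 + mm * T) :
    ζ ^ E1 * (ζ ^ E2)⁻¹ * ζ ^ E3 * (ζ ^ E4)⁻¹ * ζ ^ E5 = 1 := by
  have h1 : ζ ^ (E1 + E3 + E5) = ζ ^ (E2 + E4) := by
    rw [hkey, pow_add, pow_mul, hζ, one_pow, mul_one]
  rw [Units.ext_iff] at h1 ⊢
  push_cast at h1 ⊢
  have hz : (ζ : ℂ) ≠ 0 := Units.ne_zero ζ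
  field_simp
  rw [pow_add, pow_add] at h1
  linear_combination h1

theorem std_cocycle {ζ : ℂˣ} (hζ : ζ ^ m = 1) : std m ζ ∈ cocycles 3 (Gm m) := by
  show d 3 (Gm m) (std m ζ) = 1
  funext g
  rw [d3_apply]
  set x := g 0; set y := g 1; set z := g 2; set w := g 3
  rw [std_apply, std_apply, std_apply, std_apply, std_apply]
  refine pow_five_cancel ζ _ _ _ _ _ (epsN m x y * epsN m z w) m hζ ?_
  have hb := eps_bracket m y z w
  have hv := val_add_eq m x y
  set vy := (Multiplicative.toAdd y).val
  set vx := (Multiplicative.toAdd x).val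
  set vxy := (Multiplicative.toAdd (x * y)).val
  calc vy * epsN m z w + vx * epsN m (y * z) w + vx * epsN m y z
      = vy * epsN m z w + vx * (epsN m (y * z) w + epsN m y z) := by ring
    _ = vy * epsN m z w + vx * (epsN m y (z * w) + epsN m z w) := by rw [hb]
    _ = (vx + vy) * epsN m z w + vx * epsN m y (z * w) := by ring
    _ = (vxy + m * epsN m x y) * epsN m z w + vx * epsN m y (z * w) := by rw [← hv]
    _ = vxy * epsN m z w + vx * epsN m y (z * w) + m * (epsN m x y * epsN m z w) := by ring

/-- The trace homomorphism on 3-cochains. -/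
def Phi : Cochain 3 (Gm m) →* ℂˣ where
  toFun f := ∏ k ∈ Finset.range m, f ![gen m, gen m ^ k, gen m]
  map_one' := by simp
  map_mul' f g := by simp [Finset.prod_mul_distrib]

theorem Phi_apply (f : Cochain 3 (Gm m)) :
    Phi m f = ∏ k ∈ Finset.range m, f ![gen m, gen m ^ k, gen m] := rfl

theorem Phi_coboundary {f : Cochain 3 (Gm m)} (hf : f ∈ coboundaries 3 (Gm m)) :
    Phi m f = 1 := by
  obtain ⟨b, rfl⟩ := hf
  rw [Phi_apply]
  have h1 : ∀ k : ℕ, d 2 (Gm m) b ![gen m, gen m ^ k, gen m]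
      = b ![gen m ^ k, gen m] * (b ![gen m ^ (1 + k), gen m])⁻¹ *
        b ![gen m, gen m ^ (k + 1)] * (b ![gen m, gen m ^ k])⁻¹ := by
    intro k
    rw [d2_apply', show gen m * gen m ^ k = gen m ^ (1 + k) by rw [pow_add, pow_one],
      show gen m ^ k * gen m = gen m ^ (k + 1) by rw [pow_succ]]
  simp only [h1]
  rw [Finset.prod_mul_distrib, Finset.prod_mul_distrib, Finset.prod_mul_distrib]
  rw [Finset.prod_inv_distrib, Finset.prod_inv_distrib]
  have e1 : ∏ k ∈ Finset.range m, b ![gen m ^ (1 + k), gen m]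
      = ∏ k ∈ Finset.range m, b ![gen m ^ k, gen m] :=
    prod_range_shift (fun k => b ![gen m ^ k, gen m]) m 1
      (fun k => by show b ![gen m ^ (m + k), gen m] = _; rw [gen_pow_per])
  have e2 : ∏ k ∈ Finset.range m, b ![gen m, gen m ^ (k + 1)]
      = ∏ k ∈ Finset.range m, b ![gen m, gen m ^ k] := by
    have := prod_range_shift (fun k => b ![gen m, gen m ^ k]) m 1
      (fun k => by show b ![gen m, gen m ^ (m + k)] = _; rw [gen_pow_per])
    simpa [Nat.add_comm] using this
  rw [e1, e2]
  group

theorem Phi_std {ζ : ℂˣ} (hζ : ζ ^ m = 1) : Phi m (std m ζ) = ζ := by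
  have hm : 0 < m := Nat.pos_of_ne_zero (NeZero.ne m)
  rcases Nat.lt_or_ge 1 m with h1 | h1
  · haveI : Fact (1 < m) := ⟨h1⟩
    rw [Phi_apply]
    have hterm : ∀ k ∈ Finset.range m, std m ζ ![gen m, gen m ^ k, gen m]
        = if k = m - 1 then ζ else 1 := by
      intro k hk
      rw [Finset.mem_range] at hk
      rw [std_apply]
      have hval : (Multiplicative.toAdd (gen m)).val = 1 := by
        rw [gen, toAdd_ofAdd]; exact ZMod.val_one m
      have hvk : (Multiplicative.toAdd (gen m ^ k)).val = k := by
        rw [gen_pow, toAdd_ofAdd]; exact ZMod.val_cast_of_lt hk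
      simp only [epsN, hval, hvk]
      split_ifs with hc hd hd
      · simp
      · omega
      · omega
      · simp
    rw [Finset.prod_congr rfl hterm,
      Finset.prod_ite_eq' (Finset.range m) (m - 1) (fun _ => ζ),
      if_pos (Finset.mem_range.mpr (by omega))]
  · have hm1 : m = 1 := by omega
    subst hm1
    have hζ1 : ζ = 1 := by rw [← pow_one ζ]; exact hζ
    rw [hζ1, std_one, map_one]

variable {m}

/-- Partial products along the generator. -/
def Af (f : Cochain 3 (Gm m)) (x : Gm m) (c : ℕ) : ℂˣ :=
  ∏ k ∈ Finset.range c, f ![x, gen m ^ k, gen m]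

/-- The norm-type product. -/
def Psi (f : Cochain 3 (Gm m)) (x : Gm m) : ℂˣ := Af f x m

theorem Phi_eq_Psi (f : Cochain 3 (Gm m)) : Phi m f = Psi f (gen m) := rfl

theorem Af_per (f : Cochain 3 (Gm m)) (x : Gm m) (t : ℕ) :
    ∏ k ∈ Finset.range m, f ![x, gen m ^ (t + k), gen m] = Psi f x :=
  prod_range_shift (fun s => f ![x, gen m ^ s, gen m]) m t
    (fun k => by show f ![x, gen m ^ (m + k), gen m] = _; rw [gen_pow_per])

theorem Psi_mul {f : Cochain 3 (Gm m)} (hf : f ∈ cocycles 3 (Gm m)) (x y : Gm m) :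
    Psi f (x * y) = Psi f x * Psi f y := by
  have hco := cocycle_rel hf
  have hprod : ∏ k ∈ Finset.range m,
      (f ![y, gen m ^ k, gen m] * (f ![x * y, gen m ^ k, gen m])⁻¹ *
        f ![x, y * gen m ^ k, gen m] * (f ![x, y, gen m ^ k * gen m])⁻¹ *
        f ![x, y, gen m ^ k]) = 1 :=
    Finset.prod_eq_one fun k _ => hco x y (gen m ^ k) (gen m)
  simp only [Finset.prod_mul_distrib, Finset.prod_inv_distrib] at hprod
  have e3 : ∏ k ∈ Finset.range m, f ![x, y * gen m ^ k, gen m] = Psi f x := by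
    have hyg : ∀ k : ℕ, y * gen m ^ k = gen m ^ ((Multiplicative.toAdd y).val + k) := by
      intro k; rw [pow_add, gen_pow_val]
    simp only [hyg]
    exact Af_per f x _
  have e4 : ∏ k ∈ Finset.range m, f ![x, y, gen m ^ k * gen m]
      = ∏ k ∈ Finset.range m, f ![x, y, gen m ^ k] := by
    have hgg : ∀ k : ℕ, gen m ^ k * gen m = gen m ^ (1 + k) := by
      intro k; rw [pow_add, pow_one, mul_comm]
    simp only [hgg]
    exact prod_range_shift (fun t => f ![x, y, gen m ^ t]) m 1
      (fun k => by show f ![x, y, gen m ^ (m + k)] = _; rw [gen_pow_per])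
  rw [e3, e4] at hprod
  exact (u_shuffle hprod).trans (mul_comm _ _)

theorem Psi_eq_Phi_pow {f : Cochain 3 (Gm m)} (hf : f ∈ cocycles 3 (Gm m)) (x : Gm m) :
    Psi f x = Phi m f ^ (Multiplicative.toAdd x).val := by
  let ψ : Gm m →* ℂˣ := MonoidHom.mk' (Psi f) (Psi_mul hf)
  calc Psi f x = ψ x := rfl
    _ = ψ (gen m ^ (Multiplicative.toAdd x).val) := by rw [gen_pow_val]
    _ = ψ (gen m) ^ (Multiplicative.toAdd x).val := map_pow ψ _ _
    _ = Phi m f ^ (Multiplicative.toAdd x).val := rfl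

theorem Phi_pow_m {f : Cochain 3 (Gm m)} (hf : f ∈ cocycles 3 (Gm m)) :
    Phi m f ^ m = 1 := by
  let ψ : Gm m →* ℂˣ := MonoidHom.mk' (Psi f) (Psi_mul hf)
  calc Phi m f ^ m = ψ (gen m) ^ m := rfl
    _ = ψ (gen m ^ m) := (map_pow ψ _ _).symm
    _ = ψ 1 := by rw [gen_pow_m]
    _ = 1 := map_one ψ

theorem master {f : Cochain 3 (Gm m)} (hf : f ∈ cocycles 3 (Gm m)) :
    (Phi m f) ^ m = 1 ∧ ∃ b : Cochain 2 (Gm m), f = d 2 (Gm m) b * std m (Phi m f) := by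
  refine ⟨Phi_pow_m hf, ?_⟩
  have hco := cocycle_rel hf
  refine ⟨fun g => Af f (g 0) ((Multiplicative.toAdd (g 1)).val) * (f ![g 0, 1, 1])⁻¹, ?_⟩
  set b : Cochain 2 (Gm m) :=
    fun g => Af f (g 0) ((Multiplicative.toAdd (g 1)).val) * (f ![g 0, 1, 1])⁻¹ with hbdef
  have hb_apply : ∀ u v : Gm m,
      b ![u, v] = Af f u ((Multiplicative.toAdd v).val) * (f ![u, 1, 1])⁻¹ := by
    intro u v; rfl
  have key3 : ∀ x y z : Gm m,
      f ![x, y, z] = d 2 (Gm m) b ![x, y, z] * std m (Phi m f) ![x, y, z] := by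
    intro x y z
    have hvz : gen m ^ (Multiplicative.toAdd z).val = z := gen_pow_val m z
    -- product of cocycle identities
    have hprod : ∏ k ∈ Finset.range ((Multiplicative.toAdd z).val),
        (f ![y, gen m ^ k, gen m] * (f ![x * y, gen m ^ k, gen m])⁻¹ *
          f ![x, y * gen m ^ k, gen m] * (f ![x, y, gen m ^ k * gen m])⁻¹ *
          f ![x, y, gen m ^ k]) = 1 :=
      Finset.prod_eq_one fun k _ => hco x y (gen m ^ k) (gen m)
    simp only [Finset.prod_mul_distrib, Finset.prod_inv_distrib] at hprod
    -- middle product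
    have e3 : ∏ k ∈ Finset.range ((Multiplicative.toAdd z).val), f ![x, y * gen m ^ k, gen m]
        = Af f x ((Multiplicative.toAdd (y * z)).val) *
            (Af f x ((Multiplicative.toAdd y).val))⁻¹ * Psi f x ^ epsN m y z := by
      have hyg : ∀ k : ℕ, y * gen m ^ k = gen m ^ ((Multiplicative.toAdd y).val + k) := by
        intro k; rw [pow_add, gen_pow_val]
      simp only [hyg]
      have h5 : Af f x ((Multiplicative.toAdd y).val + (Multiplicative.toAdd z).val)
          = Af f x ((Multiplicative.toAdd y).val) *
            ∏ k ∈ Finset.range ((Multiplicative.toAdd z).val),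
              f ![x, gen m ^ ((Multiplicative.toAdd y).val + k), gen m] :=
        Finset.prod_range_add _ _ _
      have h7 : ∏ k ∈ Finset.range ((Multiplicative.toAdd z).val),
          f ![x, gen m ^ ((Multiplicative.toAdd y).val + k), gen m]
          = (Af f x ((Multiplicative.toAdd y).val))⁻¹ *
              Af f x ((Multiplicative.toAdd y).val + (Multiplicative.toAdd z).val) := by
        rw [h5, inv_mul_cancel_left]
      rw [h7, val_add_eq m y z]
      have he : epsN m y z = 0 ∨ epsN m y z = 1 := by
        rw [epsN]; split_ifs <;> simp
      rcases he with he | he <;> rw [he]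
      · rw [Nat.mul_zero, Nat.add_zero, pow_zero, mul_one, mul_comm]
      · rw [Nat.mul_one, pow_one]
        have h8 : Af f x ((Multiplicative.toAdd (y * z)).val + m)
            = Af f x ((Multiplicative.toAdd (y * z)).val) * Psi f x := by
          rw [Af, Finset.prod_range_add]
          rw [Af_per f x _]
          rfl
        rw [h8, mul_left_comm, ← mul_assoc]
    -- telescoping
    have e45 : (∏ k ∈ Finset.range ((Multiplicative.toAdd z).val),
          f ![x, y, gen m ^ k * gen m])⁻¹ *
        ∏ k ∈ Finset.range ((Multiplicative.toAdd z).val), f ![x, y, gen m ^ k]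
        = f ![x, y, 1] * (f ![x, y, z])⁻¹ := by
      have hgg : ∀ k : ℕ, gen m ^ k * gen m = gen m ^ (k + 1) := by
        intro k; rw [pow_succ]
      simp only [hgg]
      have htel : ∏ k ∈ Finset.range ((Multiplicative.toAdd z).val),
          (f ![x, y, gen m ^ k] / f ![x, y, gen m ^ (k + 1)])
          = f ![x, y, gen m ^ 0] / f ![x, y, gen m ^ ((Multiplicative.toAdd z).val)] :=
        Finset.prod_range_div' (fun t => f ![x, y, gen m ^ t]) _
      rw [Finset.prod_div_distrib] at htel
      rw [pow_zero, hvz] at htel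
      rw [mul_comm, ← div_eq_mul_inv, htel, div_eq_mul_inv]
    rw [e3] at hprod
    -- reassociate the last two factors
    have hprod2 : Af f y ((Multiplicative.toAdd z).val) *
        (Af f (x * y) ((Multiplicative.toAdd z).val))⁻¹ *
        (Af f x ((Multiplicative.toAdd (y * z)).val) *
          (Af f x ((Multiplicative.toAdd y).val))⁻¹ * Psi f x ^ epsN m y z) *
        f ![x, y, 1] * (f ![x, y, z])⁻¹ = 1 := by
      rw [mul_assoc _ (f ![x, y, 1]) _, ← e45, ← mul_assoc]
      rw [mul_assoc _ _ (Af f x ((Multiplicative.toAdd (y * z)).val) *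
          (Af f x ((Multiplicative.toAdd y).val))⁻¹ * Psi f x ^ epsN m y z)] at hprod
      rw [← mul_assoc] at hprod
      exact hprod
    -- normalization identity
    have h2 : f ![x, y, 1] = (f ![y, 1, 1])⁻¹ * f ![x * y, 1, 1] := by
      have h9 := hco x y 1 1
      rw [mul_one, one_mul] at h9
      rw [eq_inv_mul_iff_mul_eq]
      exact (u_shuffle h9).symm
    have hfin := final_algebra _ _ _ _ _ (f ![y, 1, 1]) (f ![x * y, 1, 1]) (f ![x, 1, 1])
      _ _ hprod2 h2
    rw [hfin]
    rw [d2_apply', hb_apply, hb_apply, hb_apply, hb_apply]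
    rw [std_apply, pow_mul, ← Psi_eq_Phi_pow hf]
  funext g
  have hg := key3 (g 0) (g 1) (g 2)
  rw [aux_eta3 g] at hg
  exact hg

end CyclicGroup

/-- The reduction homomorphism `ℤ/pqℤ → ℤ/qℤ`, written multiplicatively. -/
def redPQ (p q : ℕ) : Multiplicative (ZMod (p * q)) →* Multiplicative (ZMod q) :=
  AddMonoidHom.toMultiplicative
    (ZMod.castHom (dvd_mul_left q p) (ZMod q)).toAddMonoidHom


section Assembly

theorem map_vec3 {G Q : Type*} [Group G] [Group Q] (φ : G →* Q) (a b c : G) :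
    (fun i => φ (![a, b, c] i)) = ![φ a, φ b, φ c] := by
  funext i; fin_cases i <;> rfl

/-- `Phi` descends to cohomology. -/
noncomputable def HPhi (n : ℕ) [NeZero n] : H 3 (Gm n) →* ℂˣ :=
  QuotientGroup.lift _ ((Phi n).comp (cocycles 3 (Gm n)).subtype)
    (fun c hc => by
      show Phi n c.1 = 1
      exact Phi_coboundary n (Subgroup.mem_subgroupOf.mp hc))

theorem HPhi_mk (n : ℕ) [NeZero n] (c : cocycles 3 (Gm n)) :
    HPhi n (QuotientGroup.mk c) = Phi n c.1 := rfl

theorem red_gen (p q : ℕ) [NeZero (p * q)] [NeZero q] :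
    redPQ p q (gen (p * q)) = gen q := by
  show Multiplicative.ofAdd ((ZMod.castHom (dvd_mul_left q p) (ZMod q)) (1 : ZMod (p * q)))
      = Multiplicative.ofAdd (1 : ZMod q)
  rw [map_one]

theorem Phi_comap (p q : ℕ) [NeZero (p * q)] [NeZero q] (c : Cochain 3 (Gm q)) :
    Phi (p * q) (comapCochain (redPQ p q) 3 c) = (Phi q c) ^ p := by
  have hred : ∀ k : ℕ, comapCochain (redPQ p q) 3 c ![gen (p * q), gen (p * q) ^ k, gen (p * q)]
      = c ![gen q, gen q ^ k, gen q] := by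
    intro k
    show c (fun i => redPQ p q (![gen (p * q), gen (p * q) ^ k, gen (p * q)] i)) = _
    rw [map_vec3, red_gen, map_pow, red_gen]
  rw [Phi_apply, Phi_apply]
  simp only [hred]
  exact prod_range_mul_periodic (fun k => c ![gen q, gen q ^ k, gen q]) q p
    (fun k => by show c ![gen q, gen q ^ (q + k), gen q] = _; rw [gen_pow_per])

end Assembly

set_option maxHeartbeats 2000000 in
/-- for positive integers `p, q` and `n = p * q`, the cokernel of
`p₃* : H³(ℤ/qℤ, ℂˣ) → H³(ℤ/nℤ, ℂˣ)` induced by the reduction `ℤ/nℤ → ℤ/qℤ`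
is a cyclic group of order `p * gcd p q`. -/
theorem cokernel_inflation_three_zmod (p q : ℕ) (hp : 0 < p) (hq : 0 < q) :
    IsCyclic (H 3 (Multiplicative (ZMod (p * q))) ⧸ (Hmap (redPQ p q) 3).range) ∧
      Nat.card (H 3 (Multiplicative (ZMod (p * q))) ⧸ (Hmap (redPQ p q) 3).range) =
        p * Nat.gcd p q := by
  haveI hnpq : NeZero (p * q) := ⟨Nat.mul_ne_zero hp.ne' hq.ne'⟩
  haveI hnq : NeZero q := ⟨hq.ne'⟩
  set g := Nat.gcd p q with hgdef
  have hg0 : 0 < g := Nat.gcd_pos_of_pos_left q hp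
  have hgp : g ∣ p := Nat.gcd_dvd_left p q
  have hgq : g ∣ q := Nat.gcd_dvd_right p q
  set q' := q / g with hq'def
  have hq'0 : 0 < q' := Nat.div_pos (Nat.le_of_dvd hq hgq) hg0
  haveI : NeZero q' := ⟨hq'0.ne'⟩
  haveI : NeZero (p * g) := ⟨Nat.mul_ne_zero hp.ne' hg0.ne'⟩
  have hqfact : q = g * q' := (Nat.mul_div_cancel' hgq).symm
  obtain ⟨p0, hp0⟩ := hgp
  obtain ⟨q0, hq0⟩ := hgq
  have e1 : q' = q0 := by rw [hq'def, hq0]; exact Nat.mul_div_cancel_left q0 hg0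
  have hfact1 : p * q' = q * (p / g) := by
    have e2 : p / g = p0 := by rw [hp0]; exact Nat.mul_div_cancel_left p0 hg0
    rw [e1, e2, hp0, hq0]; ring
  have hfact3 : q' * (p * g) = p * q := by rw [e1, hq0]; ring
  set Pi : H 3 (Gm (p * q)) →* ℂˣ := (powMonoidHom q').comp (HPhi (p * q)) with hPidef
  have hPi_mk : ∀ c : cocycles 3 (Gm (p * q)),
      Pi (QuotientGroup.mk c) = (Phi (p * q) c.1) ^ q' := fun c => rfl
  -- Step A: the range of inflation is the kernel of `Pi`.
  have hker : (Hmap (redPQ p q) 3).range = Pi.ker := by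
    ext x
    constructor
    · rintro ⟨y, rfl⟩
      obtain ⟨c, rfl⟩ := QuotientGroup.mk_surjective y
      rw [MonoidHom.mem_ker]
      have hmapmk : Hmap (redPQ p q) 3 (QuotientGroup.mk c)
          = QuotientGroup.mk (comapCocycles (redPQ p q) 3 c) := rfl
      rw [hmapmk, hPi_mk]
      have h1 : (comapCocycles (redPQ p q) 3 c : Cochain 3 (Gm (p * q)))
          = comapCochain (redPQ p q) 3 c.1 := rfl
      rw [h1, Phi_comap, ← pow_mul, hfact1, pow_mul, Phi_pow_m c.2, one_pow]
    · intro hx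
      obtain ⟨c, rfl⟩ := QuotientGroup.mk_surjective x
      rw [MonoidHom.mem_ker, hPi_mk] at hx
      set ζ : ℂˣ := Phi (p * q) c.1 with hζdef
      obtain ⟨τ, hτ⟩ : ∃ t : ℂ, IsPrimitiveRoot t q :=
        ⟨_, Complex.isPrimitiveRoot_exp q (NeZero.ne q)⟩
      have hτ0 : τ ≠ 0 := by
        intro h0
        have h11 := hτ.pow_eq_one
        rw [h0, zero_pow (NeZero.ne q)] at h11
        exact zero_ne_one h11
      have hτ' : IsPrimitiveRoot (τ ^ g) q' := hτ.pow hq hqfact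
      have hζc : ((ζ : ℂ)) ^ q' = 1 := by
        simpa using congrArg Units.val hx
      obtain ⟨k, -, hk⟩ := hτ'.eq_pow_of_pow_eq_one hζc
      have hbez : (g : ℤ) = p * Nat.gcdA p q + q * Nat.gcdB p q := Nat.gcd_eq_gcd_ab p q
      have hτq : τ ^ (q : ℤ) = 1 := by
        rw [zpow_natCast]; exact hτ.pow_eq_one
      set a : ℤ := Nat.gcdA p q with hadef
      set bz : ℤ := Nat.gcdB p q with hbzdef
      have hη0 : τ ^ (a * (k : ℤ)) ≠ 0 := zpow_ne_zero _ hτ0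
      set η : ℂˣ := Units.mk0 (τ ^ (a * (k : ℤ))) hη0 with hηdef
      have hηq : η ^ q = 1 := by
        apply Units.ext
        show (τ ^ (a * (k : ℤ))) ^ q = 1
        rw [← zpow_natCast (τ ^ (a * (k : ℤ))) q, ← zpow_mul]
        have hexp : a * (k : ℤ) * q = (q : ℤ) * (a * k) := by ring
        rw [hexp, zpow_mul, hτq, one_zpow]
      have hηp : η ^ p = ζ := by
        apply Units.ext
        show (τ ^ (a * (k : ℤ))) ^ p = (ζ : ℂ)
        rw [← zpow_natCast (τ ^ (a * (k : ℤ))) p, ← zpow_mul]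
        have hpa : (p : ℤ) * a = g - q * bz := by linarith [hbez]
        have hexp : a * (k : ℤ) * p = (g : ℤ) * k + (q : ℤ) * (-(bz * k)) := by
          calc a * (k : ℤ) * p = ((p : ℤ) * a) * k := by ring
            _ = ((g : ℤ) - q * bz) * k := by rw [hpa]
            _ = (g : ℤ) * k + (q : ℤ) * (-(bz * k)) := by ring
        rw [hexp, zpow_add₀ hτ0, zpow_mul, zpow_mul, hτq, one_zpow, mul_one]
        rw [zpow_natCast, zpow_natCast]
        exact hk
      have hstdmem : std q η ∈ cocycles 3 (Gm q) := std_cocycle q hηq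
      refine ⟨QuotientGroup.mk ⟨std q η, hstdmem⟩, ?_⟩
      have hmapmk : Hmap (redPQ p q) 3 (QuotientGroup.mk ⟨std q η, hstdmem⟩)
          = QuotientGroup.mk (comapCocycles (redPQ p q) 3 ⟨std q η, hstdmem⟩) := rfl
      rw [hmapmk]
      rw [QuotientGroup.eq, Subgroup.mem_subgroupOf]
      set A : cocycles 3 (Gm (p * q)) := comapCocycles (redPQ p q) 3 ⟨std q η, hstdmem⟩
        with hAdef
      have hphi1 : Phi (p * q) ((A⁻¹ * c : cocycles 3 (Gm (p * q))) : Cochain 3 (Gm (p * q)))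
          = 1 := by
        have hcoeq : ((A⁻¹ * c : cocycles 3 (Gm (p * q))) : Cochain 3 (Gm (p * q)))
            = (A : Cochain 3 (Gm (p * q)))⁻¹ * (c : Cochain 3 (Gm (p * q))) := rfl
        rw [hcoeq, map_mul, map_inv]
        have hPA : Phi (p * q) (A : Cochain 3 (Gm (p * q))) = ζ := by
          have h1 : (A : Cochain 3 (Gm (p * q)))
              = comapCochain (redPQ p q) 3 (std q η) := rfl
          rw [h1, Phi_comap, Phi_std q hηq, hηp]
        rw [hPA, hζdef, inv_mul_cancel]
      obtain ⟨-, bb, hbb⟩ := master (A⁻¹ * c).2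
      rw [hphi1, std_one, mul_one] at hbb
      exact ⟨bb, hbb.symm⟩
  -- Step B: the range of `Pi` is the group of `p * g`-th roots of unity.
  have hrange : Pi.range = rootsOfUnity (p * g) ℂ := by
    ext ξ
    constructor
    · rintro ⟨x, rfl⟩
      obtain ⟨c, rfl⟩ := QuotientGroup.mk_surjective x
      rw [mem_rootsOfUnity, hPi_mk, ← pow_mul, hfact3, Phi_pow_m c.2]
    · intro hξ
      rw [mem_rootsOfUnity] at hξ
      obtain ⟨τ, hτ⟩ : ∃ t : ℂ, IsPrimitiveRoot t (p * q) :=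
        ⟨_, Complex.isPrimitiveRoot_exp (p * q) (NeZero.ne (p * q))⟩
      have hτ0 : τ ≠ 0 := by
        intro h0
        have h11 := hτ.pow_eq_one
        rw [h0, zero_pow (NeZero.ne (p * q))] at h11
        exact zero_ne_one h11
      have hτ' : IsPrimitiveRoot (τ ^ q') (p * g) :=
        hτ.pow (Nat.pos_of_ne_zero (NeZero.ne (p * q))) hfact3.symm
      have hξc : ((ξ : ℂ)) ^ (p * g) = 1 := by
        simpa using congrArg Units.val hξ
      obtain ⟨k, -, hk⟩ := hτ'.eq_pow_of_pow_eq_one hξc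
      have hρ0 : τ ^ k ≠ 0 := pow_ne_zero _ hτ0
      set ρ : ℂˣ := Units.mk0 (τ ^ k) hρ0 with hρdef
      have hρpq : ρ ^ (p * q) = 1 := by
        apply Units.ext
        show (τ ^ k) ^ (p * q) = 1
        rw [← pow_mul, Nat.mul_comm k (p * q), pow_mul, hτ.pow_eq_one, one_pow]
      have hstdmem := std_cocycle (p * q) hρpq
      refine ⟨QuotientGroup.mk ⟨std (p * q) ρ, hstdmem⟩, ?_⟩
      rw [hPi_mk]
      have h2 : Phi (p * q) (std (p * q) ρ) = ρ := Phi_std (p * q) hρpq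
      rw [h2]
      apply Units.ext
      show (τ ^ k) ^ q' = (ξ : ℂ)
      rw [← hk, ← pow_mul, ← pow_mul, Nat.mul_comm]
  -- conclusion
  have e : (H 3 (Gm (p * q)) ⧸ (Hmap (redPQ p q) 3).range) ≃* rootsOfUnity (p * g) ℂ :=
    ((QuotientGroup.quotientMulEquivOfEq hker).trans
      (QuotientGroup.quotientKerEquivRange Pi)).trans (MulEquiv.subgroupCongr hrange)
  constructor
  · exact isCyclic_of_surjective e.symm e.symm.surjective
  · rw [Nat.card_congr e.toEquiv, Complex.card_rootsOfUnity]


end GroupCohomologyUnits
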